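/- Let H_m (m ≥ 4) be the 4-graph on Z/m × (Z/2)² × (Z/2)² × (Z/2)² with edges of types 1–4c as specified. If A is an independent set, then for every i ∈ Z/m: ε_i(A) + max_x |A₂(i+2,x)| + |A₁(i+3)| ≤ 2 + χ[A₁(i+2) ≠ ∅] + χ[A₁(i+3) ≠ ∅]. -/

import Mathlib

open Finset

abbrev G2 := ZMod 2 × ZMod 2

/-- Vertices of the 4-graph `H_m`: elements `(i, x, y, z)` of `ℤ/m ⊕ (ℤ/2)⁶`. -/
abbrev HVtx (m : ℕ) := ZMod m × G2 × G2 × G2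

/-- Edge predicate of the 4-graph `H_m` on `ℤ/m ⊕ (ℤ/2)⁶` (edge types 1, 2, 3,
4a, 4b, 4c of Section 7). -/
def IsHmEdge {m : ℕ} (e : Finset (HVtx m)) : Prop :=
  e.card = 4 ∧ (
  -- type 1
  (∃ (i : ZMod m) (x y : G2) (z₁ z₂ z₃ z₄ : G2),
     e = {(i, x, y, z₁), (i, x, y, z₂), (i, x, y, z₃), (i, x, y, z₄)}) ∨
  -- type 2
  (∃ (i : ZMod m) (x₁ y₁ z₁ x₂ y₂ z₂ x₃ y₃ z₃ x₄ y₄ z₄ : G2),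
     x₁ + x₂ + x₃ + x₄ = 0 ∧
     (x₁, y₁) ≠ (x₂, y₂) ∧ (x₁, y₁) ≠ (x₃, y₃) ∧ (x₁, y₁) ≠ (x₄, y₄) ∧
     (x₂, y₂) ≠ (x₃, y₃) ∧ (x₂, y₂) ≠ (x₄, y₄) ∧ (x₃, y₃) ≠ (x₄, y₄) ∧
     e = {(i, x₁, y₁, z₁), (i, x₂, y₂, z₂), (i, x₃, y₃, z₃), (i, x₄, y₄, z₄)}) ∨
  -- type 3
  (∃ (i : ZMod m) (x₁ y₁' z₁' y₁'' z₁'' x₂' y₂' z₂' x₂'' y₂'' z₂'' : G2),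
     y₁' ≠ y₁'' ∧ y₁' + y₁'' + x₂' + x₂'' = 0 ∧
     e = {(i, x₁, y₁', z₁'), (i, x₁, y₁'', z₁''),
          (i + 1, x₂', y₂', z₂'), (i + 1, x₂'', y₂'', z₂'')}) ∨
  -- type 4a
  (∃ (i : ZMod m) (x₁ y₁ z₁' z₁'' x₂ y₂ z₂' z₂'' : G2),
     z₁' ≠ z₁'' ∧ z₂' ≠ z₂'' ∧ (x₁, y₁) ≠ (x₂, y₂) ∧
     e = {(i, x₁, y₁, z₁'), (i, x₁, y₁, z₁''),
          (i, x₂, y₂, z₂'), (i, x₂, y₂, z₂'')}) ∨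
  -- type 4b
  (∃ (i : ZMod m) (x₁ y₁ z₁' z₁'' x₂ y₂' z₂' y₂'' z₂'' : G2),
     z₁' ≠ z₁'' ∧ y₂' ≠ y₂'' ∧
     e = {(i, x₁, y₁, z₁'), (i, x₁, y₁, z₁''),
          (i + 2, x₂, y₂', z₂'), (i + 2, x₂, y₂'', z₂'')}) ∨
  -- type 4c
  (∃ (i : ZMod m) (x₁ y₁ z₁' z₁'' x₂' y₂' z₂' x₂'' y₂'' z₂'' : G2),
     z₁' ≠ z₁'' ∧ z₁' + z₁'' + x₂' + x₂'' = 0 ∧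
     e = {(i, x₁, y₁, z₁'), (i, x₁, y₁, z₁''),
          (i + 3, x₂', y₂', z₂'), (i + 3, x₂'', y₂'', z₂'')}))

/-- `A₃(i,x,y) = { z : (i,x,y,z) ∈ A }`. -/
def A3 {m : ℕ} (A : Finset (HVtx m)) (i : ZMod m) (x y : G2) : Finset G2 :=
  Finset.univ.filter fun z => (i, x, y, z) ∈ A

/-- `A₂(i,x) = { y : ∃ z, (i,x,y,z) ∈ A }`. -/
def A2 {m : ℕ} (A : Finset (HVtx m)) (i : ZMod m) (x : G2) : Finset G2 :=
  Finset.univ.filter fun y => ∃ z, (i, x, y, z) ∈ A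

/-- `A₁(i) = { x : ∃ y z, (i,x,y,z) ∈ A }`. -/
def A1 {m : ℕ} (A : Finset (HVtx m)) (i : ZMod m) : Finset G2 :=
  Finset.univ.filter fun x => (Finset.univ.filter fun y : G2 => (A3 A i x y).Nonempty).Nonempty

/-- `εᵢ(A) = ∑_{x,y} max{0, |A₃(i,x,y)| - 1}` (note `t - 1 = max{0, t-1}` in `ℕ`). -/
def epsi {m : ℕ} (A : Finset (HVtx m)) (i : ZMod m) : ℕ :=
  ∑ x : G2, ∑ y : G2, ((A3 A i x y).card - 1)

set_option linter.unusedSectionVars false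
set_option linter.unusedVariables false

section Helpers

lemma card4' {α} [DecidableEq α] {a b c d : α} (h1: a≠b)(h2: a≠c)(h3: a≠d)(h4: b≠c)(h5: b≠d)(h6: c≠d) :
    ({a,b,c,d} : Finset α).card = 4 := by
  rw [Finset.card_insert_of_notMem (by simp [h1,h2,h3]),
      Finset.card_insert_of_notMem (by simp [h4,h5]),
      Finset.card_insert_of_notMem (by simp [h6]), Finset.card_singleton]

variable {m : ℕ} [NeZero m]

lemma vne_i {i i' : ZMod m} {x x' y y' z z' : G2} (h : i ≠ i') : (i,x,y,z) ≠ (i',x',y',z') :=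
  fun he => h (congrArg (fun v => v.1) he)
lemma vne_x {i i' : ZMod m} {x x' y y' z z' : G2} (h : x ≠ x') : (i,x,y,z) ≠ (i',x',y',z') :=
  fun he => h (congrArg (fun v => v.2.1) he)
lemma vne_y {i i' : ZMod m} {x x' y y' z z' : G2} (h : y ≠ y') : (i,x,y,z) ≠ (i',x',y',z') :=
  fun he => h (congrArg (fun v => v.2.2.1) he)
lemma vne_z {i i' : ZMod m} {x x' y y' z z' : G2} (h : z ≠ z') : (i,x,y,z) ≠ (i',x',y',z') :=
  fun he => h (congrArg (fun v => v.2.2.2) he)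
lemma vne_xy {i i' : ZMod m} {x x' y y' z z' : G2} (h : (x,y) ≠ (x',y')) :
    (i,x,y,z) ≠ (i',x',y',z') :=
  fun he => h (congrArg (fun v => (v.2.1, v.2.2.1)) he)

lemma pne1 {x x' y y' : G2} (h : x ≠ x') : (x,y) ≠ (x',y') := fun he => h (congrArg Prod.fst he)
lemma pne2 {x y y' : G2} (h : y ≠ y') : (x,y) ≠ (x,y') := fun he => h (congrArg Prod.snd he)

lemma g2_add4 (x : G2) : x + x + x + x = 0 := by revert x; decide
lemma g2_uv {a b u v : G2} (hab : a ≠ b) (h : a + b + u + v = 0) : u ≠ v := by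
  revert a b u v; decide

variable (A : Finset (HVtx m))

lemma mem_A3' {i : ZMod m} {x y z : G2} : z ∈ A3 A i x y ↔ (i,x,y,z) ∈ A := by simp [A3]
lemma mem_A2' {i : ZMod m} {x y : G2} : y ∈ A2 A i x ↔ ∃ z, (i,x,y,z) ∈ A := by simp [A2]
lemma mem_A1' {i : ZMod m} {x : G2} : x ∈ A1 A i ↔ ∃ y z, (i,x,y,z) ∈ A := by
  unfold A1 A3
  constructor
  · intro h
    obtain ⟨y, hy⟩ := (Finset.mem_filter.mp h).2
    obtain ⟨z, hz⟩ := (Finset.mem_filter.mp hy).2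
    exact ⟨y, z, (Finset.mem_filter.mp hz).2⟩
  · rintro ⟨y, z, h⟩
    exact Finset.mem_filter.mpr ⟨Finset.mem_univ _, y, Finset.mem_filter.mpr
      ⟨Finset.mem_univ _, z, Finset.mem_filter.mpr ⟨Finset.mem_univ _, h⟩⟩⟩

lemma ne_addk (hm : 4 ≤ m) (j : ZMod m) (k : ℕ) (hk1 : k ≠ 0) (hk2 : k < 4) :
    j ≠ j + (k : ℕ) := by
  intro h
  have h2 : ((k:ℕ) : ZMod m) = 0 := by
    have := congrArg (· - j) h
    simpa using this.symm
  rw [ZMod.natCast_eq_zero_iff] at h2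
  have := Nat.le_of_dvd (by omega) h2
  omega

lemma ne1' (hm : 4 ≤ m) (j : ZMod m) : j ≠ j + 1 := by
  have := ne_addk hm j 1 (by omega) (by omega); simpa using this
lemma ne2' (hm : 4 ≤ m) (j : ZMod m) : j ≠ j + 2 := by
  have := ne_addk hm j 2 (by omega) (by omega); push_cast at this; exact this
lemma ne3' (hm : 4 ≤ m) (j : ZMod m) : j ≠ j + 3 := by
  have := ne_addk hm j 3 (by omega) (by omega); push_cast at this; exact this

lemma g2_univ (s : Finset G2) (h : 4 ≤ s.card) : s = Finset.univ := by
  apply Finset.eq_univ_of_card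
  have h2 : s.card ≤ 4 := by simpa using Finset.card_le_card s.subset_univ
  have h3 : Fintype.card G2 = 4 := rfl
  omega

variable (hA : ∀ e : Finset (HVtx m), IsHmEdge e → ¬ e ⊆ A) (hm : 4 ≤ m)
include hA hm

/-- type 1 -/
lemma noE1 {i : ZMod m} {x y : G2} (h : 4 ≤ (A3 A i x y).card) : False := by
  have hu := g2_univ _ h
  have hmem : ∀ z : G2, (i,x,y,z) ∈ A := fun z => (mem_A3' A).mp (by rw [hu]; simp)
  refine hA {(i,x,y,((0,0):G2)), (i,x,y,((0,1):G2)), (i,x,y,((1,0):G2)), (i,x,y,((1,1):G2))}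
    ⟨?_, Or.inl ⟨i,x,y,_,_,_,_,rfl⟩⟩ ?_
  · exact card4' (vne_z (by decide)) (vne_z (by decide)) (vne_z (by decide))
      (vne_z (by decide)) (vne_z (by decide)) (vne_z (by decide))
  · simp only [Finset.insert_subset_iff, Finset.singleton_subset_iff]
    exact ⟨hmem _, hmem _, hmem _, hmem _⟩

/-- type 2 with common x -/
lemma noE2a {j : ZMod m} {x : G2} (h : 4 ≤ (A2 A j x).card) : False := by
  have hu := g2_univ _ h
  have hmem : ∀ y : G2, ∃ z, (j,x,y,z) ∈ A := fun y => (mem_A2' A).mp (by rw [hu]; simp)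
  obtain ⟨z1, h1⟩ := hmem (0,0); obtain ⟨z2, h2⟩ := hmem (0,1)
  obtain ⟨z3, h3⟩ := hmem (1,0); obtain ⟨z4, h4⟩ := hmem (1,1)
  refine hA {(j,x,((0,0):G2),z1), (j,x,((0,1):G2),z2), (j,x,((1,0):G2),z3), (j,x,((1,1):G2),z4)}
    ⟨?_, Or.inr (Or.inl ⟨j,x,(0,0),z1,x,(0,1),z2,x,(1,0),z3,x,(1,1),z4, g2_add4 x,
      pne2 (by decide), pne2 (by decide), pne2 (by decide),
      pne2 (by decide), pne2 (by decide), pne2 (by decide), rfl⟩)⟩ ?_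
  · exact card4' (vne_y (by decide)) (vne_y (by decide)) (vne_y (by decide))
      (vne_y (by decide)) (vne_y (by decide)) (vne_y (by decide))
  · simp only [Finset.insert_subset_iff, Finset.singleton_subset_iff]
    exact ⟨h1, h2, h3, h4⟩

/-- type 2 with distinct x -/
lemma noE2b {j : ZMod m} (h : 4 ≤ (A1 A j).card) : False := by
  have hu := g2_univ _ h
  have hmem : ∀ x : G2, ∃ y z, (j,x,y,z) ∈ A := fun x => (mem_A1' A).mp (by rw [hu]; simp)
  obtain ⟨y1, z1, h1⟩ := hmem (0,0); obtain ⟨y2, z2, h2⟩ := hmem (0,1)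
  obtain ⟨y3, z3, h3⟩ := hmem (1,0); obtain ⟨y4, z4, h4⟩ := hmem (1,1)
  refine hA {(j,((0,0):G2),y1,z1), (j,((0,1):G2),y2,z2), (j,((1,0):G2),y3,z3), (j,((1,1):G2),y4,z4)}
    ⟨?_, Or.inr (Or.inl ⟨j,(0,0),y1,z1,(0,1),y2,z2,(1,0),y3,z3,(1,1),y4,z4, by decide,
      pne1 (by decide), pne1 (by decide), pne1 (by decide),
      pne1 (by decide), pne1 (by decide), pne1 (by decide), rfl⟩)⟩ ?_
  · exact card4' (vne_x (by decide)) (vne_x (by decide)) (vne_x (by decide))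
      (vne_x (by decide)) (vne_x (by decide)) (vne_x (by decide))
  · simp only [Finset.insert_subset_iff, Finset.singleton_subset_iff]
    exact ⟨h1, h2, h3, h4⟩

/-- type 3 -/
lemma noE3 {j : ZMod m} {x y' y'' : G2}
    (h1 : y' ∈ A2 A j x) (h2 : y'' ∈ A2 A j x) (hne : y' ≠ y'') {u v : G2}
    (hu : u ∈ A1 A (j+1)) (hv : v ∈ A1 A (j+1)) (hsum : y' + y'' + u + v = 0) : False := by
  have huv : u ≠ v := g2_uv hne hsum
  obtain ⟨z', hz'⟩ := (mem_A2' A).mp h1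
  obtain ⟨z'', hz''⟩ := (mem_A2' A).mp h2
  obtain ⟨yu, zu, hyu⟩ := (mem_A1' A).mp hu
  obtain ⟨yv, zv, hyv⟩ := (mem_A1' A).mp hv
  have hlev : j ≠ j + 1 := ne1' hm j
  refine hA {(j,x,y',z'), (j,x,y'',z''), (j+1,u,yu,zu), (j+1,v,yv,zv)}
    ⟨?_, Or.inr (Or.inr (Or.inl ⟨j,x,y',z',y'',z'',u,yu,zu,v,yv,zv,hne,hsum,rfl⟩))⟩ ?_
  · exact card4' (vne_y hne) (vne_i hlev) (vne_i hlev) (vne_i hlev) (vne_i hlev) (vne_x huv)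
  · simp only [Finset.insert_subset_iff, Finset.singleton_subset_iff]
    exact ⟨hz', hz'', hyu, hyv⟩

/-- type 4a -/
lemma noE4a {i : ZMod m} {x₁ y₁ x₂ y₂ : G2} (hne : (x₁,y₁) ≠ (x₂,y₂))
    (h1 : 2 ≤ (A3 A i x₁ y₁).card) (h2 : 2 ≤ (A3 A i x₂ y₂).card) : False := by
  obtain ⟨a, ha, b, hb, hab⟩ := Finset.one_lt_card.mp h1
  obtain ⟨c, hc, d, hd, hcd⟩ := Finset.one_lt_card.mp h2
  rw [mem_A3'] at ha hb hc hd
  refine hA {(i,x₁,y₁,a), (i,x₁,y₁,b), (i,x₂,y₂,c), (i,x₂,y₂,d)}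
    ⟨?_, Or.inr (Or.inr (Or.inr (Or.inl ⟨i,x₁,y₁,a,b,x₂,y₂,c,d,hab,hcd,hne,rfl⟩)))⟩ ?_
  · exact card4' (vne_z hab) (vne_xy hne) (vne_xy hne) (vne_xy hne) (vne_xy hne) (vne_z hcd)
  · simp only [Finset.insert_subset_iff, Finset.singleton_subset_iff]
    exact ⟨ha, hb, hc, hd⟩

/-- type 4b -/
lemma noE4b {i : ZMod m} {x₁ y₁ x₂ : G2}
    (h1 : 2 ≤ (A3 A i x₁ y₁).card) (h2 : 2 ≤ (A2 A (i+2) x₂).card) : False := by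
  obtain ⟨a, ha, b, hb, hab⟩ := Finset.one_lt_card.mp h1
  obtain ⟨c, hc, d, hd, hcd⟩ := Finset.one_lt_card.mp h2
  rw [mem_A3'] at ha hb
  obtain ⟨zc, hzc⟩ := (mem_A2' A).mp hc
  obtain ⟨zd, hzd⟩ := (mem_A2' A).mp hd
  have hlev : i ≠ i + 2 := ne2' hm i
  refine hA {(i,x₁,y₁,a), (i,x₁,y₁,b), (i+2,x₂,c,zc), (i+2,x₂,d,zd)}
    ⟨?_, Or.inr (Or.inr (Or.inr (Or.inr (Or.inl ⟨i,x₁,y₁,a,b,x₂,c,zc,d,zd,hab,hcd,rfl⟩))))⟩ ?_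
  · exact card4' (vne_z hab) (vne_i hlev) (vne_i hlev) (vne_i hlev) (vne_i hlev) (vne_y hcd)
  · simp only [Finset.insert_subset_iff, Finset.singleton_subset_iff]
    exact ⟨ha, hb, hzc, hzd⟩

/-- type 4c -/
lemma noE4c {i : ZMod m} {x₁ y₁ a b : G2}
    (ha : a ∈ A3 A i x₁ y₁) (hb : b ∈ A3 A i x₁ y₁) (hab : a ≠ b) {u v : G2}
    (hu : u ∈ A1 A (i+3)) (hv : v ∈ A1 A (i+3)) (hsum : a + b + u + v = 0) : False := by
  have huv : u ≠ v := g2_uv hab hsum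
  rw [mem_A3'] at ha hb
  obtain ⟨yu, zu, hyu⟩ := (mem_A1' A).mp hu
  obtain ⟨yv, zv, hyv⟩ := (mem_A1' A).mp hv
  have hlev : i ≠ i + 3 := ne3' hm i
  refine hA {(i,x₁,y₁,a), (i,x₁,y₁,b), (i+3,u,yu,zu), (i+3,v,yv,zv)}
    ⟨?_, Or.inr (Or.inr (Or.inr (Or.inr (Or.inr ⟨i,x₁,y₁,a,b,u,yu,zu,v,yv,zv,hab,hsum,rfl⟩))))⟩ ?_
  · exact card4' (vne_z hab) (vne_i hlev) (vne_i hlev) (vne_i hlev) (vne_i hlev) (vne_x huv)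
  · simp only [Finset.insert_subset_iff, Finset.singleton_subset_iff]
    exact ⟨ha, hb, hyu, hyv⟩

end Helpers

lemma g2_three : ∀ a b u v w : G2, a ≠ b → u ≠ v → u ≠ w → v ≠ w →
    (u + v = a + b ∨ u + w = a + b ∨ v + w = a + b) := by decide
lemma g2_sum0 : ∀ a b u v : G2, u + v = a + b → a + b + u + v = 0 := by decide
theorem stmt_13 (m : ℕ) [NeZero m] (hm : 4 ≤ m)
    (A : Finset (HVtx m))
    (hA : ∀ e : Finset (HVtx m), IsHmEdge e → ¬ e ⊆ A)
    (i : ZMod m) :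
    epsi A i + (Finset.univ.sup fun x : G2 => (A2 A (i + 2) x).card)
        + (A1 A (i + 3)).card
      ≤ 2 + (if (A1 A (i + 2)).Nonempty then 1 else 0)
          + (if (A1 A (i + 3)).Nonempty then 1 else 0) := by
  have h23 : i + 2 + 1 = i + 3 := by ring
  set M := Finset.univ.sup fun x : G2 => (A2 A (i + 2) x).card with hMdef
  set L := (A1 A (i + 3)).card with hLdef
  -- basic bounds
  have hc3 : ∀ x y : G2, (A3 A i x y).card ≤ 3 := fun x y => by
    by_contra h; exact noE1 A hA hm (show 4 ≤ (A3 A i x y).card by omega)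
  have hM3 : M ≤ 3 := Finset.sup_le fun x _ => by
    by_contra h; exact noE2a A hA hm (show 4 ≤ (A2 A (i+2) x).card by omega)
  have hL3 : L ≤ 3 := by
    by_contra h; exact noE2b A hA hm (show 4 ≤ (A1 A (i+3)).card by omega)
  have hMw : ∀ k : ℕ, 0 < k → k ≤ M → ∃ x, k ≤ (A2 A (i+2) x).card := fun k hk h => by
    obtain ⟨x, -, hx⟩ := (Finset.le_sup_iff hk).mp h
    exact ⟨x, hx⟩
  -- chi facts
  have hx2 : 1 ≤ M → (A1 A (i+2)).Nonempty := by
    intro h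
    obtain ⟨x, hx⟩ := hMw 1 (by omega) h
    obtain ⟨y, hy⟩ := Finset.card_pos.mp (show 0 < (A2 A (i+2) x).card by omega)
    obtain ⟨z, hz⟩ := (mem_A2' A).mp hy
    exact ⟨x, (mem_A1' A).mpr ⟨y, z, hz⟩⟩
  have hx3 : (A1 A (i+3)).Nonempty ↔ 1 ≤ L := Finset.card_pos.symm
  -- M vs L via type 3
  have hML1 : 2 ≤ M → L ≤ 2 := by
    intro h
    by_contra hL
    obtain ⟨x, hx⟩ := hMw 2 (by omega) h
    obtain ⟨y', hy', y'', hy'', hyne⟩ := Finset.one_lt_card.mp hx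
    obtain ⟨u, v, w, hu, hv, hw, huv, huw, hvw⟩ := Finset.two_lt_card_iff.mp
      (show 2 < (A1 A (i+3)).card by omega)
    rw [← h23] at hu hv hw
    rcases g2_three y' y'' u v w hyne huv huw hvw with hs | hs | hs
    · exact noE3 A hA hm hy' hy'' hyne hu hv (g2_sum0 _ _ _ _ hs)
    · exact noE3 A hA hm hy' hy'' hyne hu hw (g2_sum0 _ _ _ _ hs)
    · exact noE3 A hA hm hy' hy'' hyne hv hw (g2_sum0 _ _ _ _ hs)
  have hML2 : 3 ≤ M → L ≤ 1 := by
    intro h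
    by_contra hL
    obtain ⟨x, hx⟩ := hMw 3 (by omega) h
    obtain ⟨y1, y2, y3, hy1, hy2, hy3, h12, h13, h23y⟩ := Finset.two_lt_card_iff.mp
      (show 2 < (A2 A (i+2) x).card by omega)
    obtain ⟨u, hu, v, hv, huv⟩ := Finset.one_lt_card.mp
      (show 1 < (A1 A (i+3)).card by omega)
    rw [← h23] at hu hv
    rcases g2_three u v y1 y2 y3 huv h12 h13 h23y with hs | hs | hs
    · exact noE3 A hA hm hy1 hy2 h12 hu hv (by
        have := g2_sum0 u v y1 y2 hs
        have h2 : y1 + y2 + u + v = u + v + y1 + y2 := by ring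
        rw [h2]; exact this)
    · exact noE3 A hA hm hy1 hy3 h13 hu hv (by
        have := g2_sum0 u v y1 y3 hs
        have h2 : y1 + y3 + u + v = u + v + y1 + y3 := by ring
        rw [h2]; exact this)
    · exact noE3 A hA hm hy2 hy3 h23y hu hv (by
        have := g2_sum0 u v y2 y3 hs
        have h2 : y2 + y3 + u + v = u + v + y2 + y3 := by ring
        rw [h2]; exact this)
  -- epsilon structure
  have heps : epsi A i = 0 ∨
      ∃ x₀ y₀, 2 ≤ (A3 A i x₀ y₀).card ∧ epsi A i = (A3 A i x₀ y₀).card - 1 := by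
    by_cases h : ∃ x₀ y₀, 2 ≤ (A3 A i x₀ y₀).card
    · obtain ⟨x₀, y₀, h2⟩ := h
      right
      refine ⟨x₀, y₀, h2, ?_⟩
      have hsmall : ∀ x y : G2, (x, y) ≠ (x₀, y₀) → (A3 A i x y).card ≤ 1 := by
        intro x y hxy
        by_contra hc
        exact noE4a A hA hm hxy (by omega) h2
      unfold epsi
      calc (∑ x : G2, ∑ y : G2, ((A3 A i x y).card - 1))
          = ∑ x : G2, ∑ y : G2, (if x = x₀ then (if y = y₀ then (A3 A i x₀ y₀).card - 1 else 0) else 0) := by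
            refine Finset.sum_congr rfl fun x _ => Finset.sum_congr rfl fun y _ => ?_
            by_cases hx : x = x₀
            · by_cases hy : y = y₀
              · subst hx; subst hy; simp
              · have := hsmall x y (by simp [hx, hy])
                rw [if_pos hx, if_neg hy]; omega
            · have := hsmall x y (by simp [hx])
              rw [if_neg hx]; omega
        _ = (A3 A i x₀ y₀).card - 1 := by simp
    · left
      push_neg at h
      unfold epsi
      refine Finset.sum_eq_zero fun x _ => Finset.sum_eq_zero fun y _ => ?_
      have := h x y
      omega
  rcases heps with h0 | ⟨x₀, y₀, h2, heq⟩
  · -- epsilon = 0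
    rw [h0]
    have d1 : M ≤ 1 ∨ L ≤ 2 := by
      by_cases h : 2 ≤ M
      · exact Or.inr (hML1 h)
      · exact Or.inl (by omega)
    have d2 : M ≤ 2 ∨ L ≤ 1 := by
      by_cases h : 3 ≤ M
      · exact Or.inr (hML2 h)
      · exact Or.inl (by omega)
    by_cases hN2 : (A1 A (i+2)).Nonempty <;> by_cases hN3 : (A1 A (i+3)).Nonempty
    · simp only [hN2, hN3, if_true]; omega
    · have : L = 0 := by rw [hLdef]; simp [Finset.not_nonempty_iff_eq_empty.mp hN3]
      simp only [hN2, hN3, if_true, if_false]; omega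
    · have hM0 : M = 0 := by by_contra h; exact hN2 (hx2 (by omega))
      simp only [hN2, hN3, if_true, if_false]; omega
    · have hM0 : M = 0 := by by_contra h; exact hN2 (hx2 (by omega))
      have : L = 0 := by rw [hLdef]; simp [Finset.not_nonempty_iff_eq_empty.mp hN3]
      simp only [hN2, hN3, if_false]; omega
  · -- epsilon ≥ 1
    have hcle := hc3 x₀ y₀
    have hM1 : M ≤ 1 := by
      by_contra h
      obtain ⟨x, hx⟩ := hMw 2 (by omega) (by omega)
      exact noE4b A hA hm h2 hx
    have hL2 : L ≤ 2 := by
      by_contra hL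
      obtain ⟨a, ha, b, hb, hab⟩ := Finset.one_lt_card.mp h2
      obtain ⟨u, v, w, hu, hv, hw, huv, huw, hvw⟩ := Finset.two_lt_card_iff.mp
        (show 2 < (A1 A (i+3)).card by omega)
      rcases g2_three a b u v w hab huv huw hvw with hs | hs | hs
      · exact noE4c A hA hm ha hb hab hu hv (g2_sum0 _ _ _ _ hs)
      · exact noE4c A hA hm ha hb hab hu hw (g2_sum0 _ _ _ _ hs)
      · exact noE4c A hA hm ha hb hab hv hw (g2_sum0 _ _ _ _ hs)
    have hL1 : (A3 A i x₀ y₀).card = 3 → L ≤ 1 := by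
      intro h3
      by_contra hL
      obtain ⟨a, b, c, ha, hb, hc, hab, hac, hbc⟩ := Finset.two_lt_card_iff.mp
        (show 2 < (A3 A i x₀ y₀).card by omega)
      obtain ⟨u, hu, v, hv, huv⟩ := Finset.one_lt_card.mp
        (show 1 < (A1 A (i+3)).card by omega)
      rcases g2_three u v a b c huv hab hac hbc with hs | hs | hs
      · exact noE4c A hA hm ha hb hab hu hv (by
          have := g2_sum0 u v a b hs
          have he : a + b + u + v = u + v + a + b := by ring
          rw [he]; exact this)
      · exact noE4c A hA hm ha hc hac hu hv (by
          have := g2_sum0 u v a c hs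
          have he : a + c + u + v = u + v + a + c := by ring
          rw [he]; exact this)
      · exact noE4c A hA hm hb hc hbc hu hv (by
          have := g2_sum0 u v b c hs
          have he : b + c + u + v = u + v + b + c := by ring
          rw [he]; exact this)
    have dc : (A3 A i x₀ y₀).card = 3 ∨ (A3 A i x₀ y₀).card = 2 := by omega
    have hN2 : (A1 A (i+2)).Nonempty → (if (A1 A (i+2)).Nonempty then 1 else 0) = 1 := by
      intro h; simp [h]
    by_cases hn2 : (A1 A (i+2)).Nonempty <;> by_cases hn3 : (A1 A (i+3)).Nonempty
    · have hL1' : L ≥ 1 := hx3.mp hn3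
      simp only [hn2, hn3, if_true]
      rcases dc with h3 | hcc
      · have := hL1 h3; omega
      · omega
    · have hL0 : L = 0 := by rw [hLdef]; simp [Finset.not_nonempty_iff_eq_empty.mp hn3]
      simp only [hn2, hn3, if_true, if_false]; omega
    · have hM0 : M = 0 := by by_contra h; exact hn2 (hx2 (by omega))
      simp only [hn2, hn3, if_true, if_false]
      rcases dc with h3 | hcc
      · have := hL1 h3; omega
      · omega
    · have hM0 : M = 0 := by by_contra h; exact hn2 (hx2 (by omega))
      have hL0 : L = 0 := by rw [hLdef]; simp [Finset.not_nonempty_iff_eq_empty.mp hn3]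
      simp only [hn2, hn3, if_false]; omega
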